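/- For all complex numbers t, f, g, a, b, c, d with t ≠ 0, f ≠ 0 and f ≠ 1, the function ε ↦ ε²·F_VI(1+εt, f, g/ε, a, b, −d/ε² + c/ε, d/ε²) tends to F_V(t,f,g,a,b,c,d) = (1/(2f) + 1/(f−1))g² − g/t + ((f−1)²/t²)(af + b/f) + cf/t + d·f(f+1)/(f−1) as ε → 0 along nonzero complex values of ε (punctured neighborhood filter of 0 in ℂ). -/

import Mathlib

/-- Right-hand side of the sixth Painlevé equation. -/
noncomputable def FVI (x u v α β γ δ : ℂ) : ℂ :=
  (1 / 2) * (1 / u + 1 / (u - 1) + 1 / (u - x)) * v ^ 2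
    - (1 / x + 1 / (x - 1) + 1 / (u - x)) * v
    + (u * (u - 1) * (u - x) / (x ^ 2 * (x - 1) ^ 2)) *
        (α + β * x / u ^ 2 + γ * (x - 1) / (u - 1) ^ 2 + δ * x * (x - 1) / (u - x) ^ 2)

/-- Right-hand side of the fifth Painlevé equation. -/
noncomputable def FV (x u v α β γ δ : ℂ) : ℂ :=
  (1 / (2 * u) + 1 / (u - 1)) * v ^ 2 - v / x
    + ((u - 1) ^ 2 / x ^ 2) * (α * u + β / u) + γ * u / x + δ * u * (u + 1) / (u - 1)

set_option maxHeartbeats 8000000 in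
/-- Key polynomial identity clearing all denominators in `ε² · FVI`. -/
lemma FVI_clear_denoms (t f g a b c d ε : ℂ) (ht : t ≠ 0) (hf0 : f ≠ 0) (hf1' : f - 1 ≠ 0)
    (hε : ε ≠ 0) (hx : 1 + ε * t ≠ 0) (hfx : f - 1 - ε * t ≠ 0)
    (hux : f - (1 + ε * t) ≠ 0) (hx1 : (1 + ε * t) - 1 ≠ 0) :
    (t^2*(1+ε*t)^2*g^2*((f-1)*(f-1-ε*t)+f*(f-1-ε*t)+f*(f-1))
      - 2*ε*g*t^2*f*(f-1)*(1+ε*t)*(f-1-ε*t)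
      - 2*g*t*f*(f-1)*(1+ε*t)^2*(f-1-ε*t)
      - 2*ε*g*t^2*f*(f-1)*(1+ε*t)^2
      + 2*(f-1)^2*(f-1-ε*t)^2*(a*f^2+b*(1+ε*t))
      + 2*f^2*t*(d*t*(2*(f-1)-ε*t)+c*(f-1-ε*t)^2+d*(f-1)^2*t))
    = ε ^ 2 * FVI (1 + ε * t) f (g / ε) a b (-d / ε ^ 2 + c / ε) (d / ε ^ 2)
       * (2*t^2*f*(f-1)*(1+ε*t)^2*(f-1-ε*t)) := by
  have hD1 : 2 * (f * (f - 1) * (f - (1 + ε * t))) * ε ^ 2 ≠ 0 := by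
    simp [hf0, hf1', hux, hε]
  have hD2 : (1 + ε * t) * (ε * t) * (f - (1 + ε * t)) * ε ≠ 0 := by
    simp [hx, hε, ht, hux]
  have hD3 : (1 + ε * t) ^ 2 * (ε * t) ^ 2 *
      (f ^ 2 * (ε ^ 2 * ε * (f - 1) ^ 2) * (ε ^ 2 * (f - (1 + ε * t)) ^ 2)) ≠ 0 := by
    simp [hx, hε, ht, hf0, hf1', hux, sub_ne_zero]
  rw [FVI]
  field_simp [hε, ht, hf0, hf1', hx, hfx, hux, hx1, (by rwa [mul_comm] at hux : f - (1 + t * ε) ≠ 0),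
    (by rwa [mul_comm] at hx : 1 + t * ε ≠ 0)]
  ring

set_option maxHeartbeats 1000000 in
/-- `FV` with its denominators cleared. -/
lemma FV_clear_denoms (t f g a b c d : ℂ) (ht : t ≠ 0) (hf0 : f ≠ 0) (hf1' : f - 1 ≠ 0) :
    FV t f g a b c d * (2*f*(f-1)*t^2) =
      t^2*g^2*(3*f-1) - 2*g*t*f*(f-1) + 2*(f-1)^3*(a*f^2+b)
        + 2*c*f^2*(f-1)*t + 2*d*f^2*(f+1)*t^2 := by
  have hDq : 2 * f * (f - 1) * t * (t ^ 2 * f) ≠ 0 := by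
    simp [ht, hf0, hf1']
  rw [FV]
  field_simp [ht, hf0, hf1']
  ring

set_option maxHeartbeats 1000000 in
/-- Degeneration of Painlevé VI to Painlevé V: for all `t f g a b c d : ℂ` with
`t ≠ 0`, `f ≠ 0`, `f ≠ 1`, the function
`ε ↦ ε²·F_VI(1+εt, f, g/ε, a, b, −d/ε² + c/ε, d/ε²)` tends to `F_V(t,f,g,a,b,c,d)`
as `ε → 0` along nonzero complex values. -/
theorem stmt_6 (t f g a b c d : ℂ) (ht : t ≠ 0) (hf0 : f ≠ 0) (hf1 : f ≠ 1) :
    Filter.Tendsto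
      (fun ε : ℂ =>
        ε ^ 2 * FVI (1 + ε * t) f (g / ε) a b (-d / ε ^ 2 + c / ε) (d / ε ^ 2))
      (nhdsWithin 0 {0}ᶜ) (nhds (FV t f g a b c d)) := by
  have hf1' : f - 1 ≠ 0 := sub_ne_zero.mpr hf1
  set N : ℂ → ℂ := fun ε =>
    t^2*(1+ε*t)^2*g^2*((f-1)*(f-1-ε*t)+f*(f-1-ε*t)+f*(f-1))
      - 2*ε*g*t^2*f*(f-1)*(1+ε*t)*(f-1-ε*t)
      - 2*g*t*f*(f-1)*(1+ε*t)^2*(f-1-ε*t)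
      - 2*ε*g*t^2*f*(f-1)*(1+ε*t)^2
      + 2*(f-1)^2*(f-1-ε*t)^2*(a*f^2+b*(1+ε*t))
      + 2*f^2*t*(d*t*(2*(f-1)-ε*t)+c*(f-1-ε*t)^2+d*(f-1)^2*t) with hN
  set D : ℂ → ℂ := fun ε => 2*t^2*f*(f-1)*(1+ε*t)^2*(f-1-ε*t) with hD
  have hQ : (2*f*(f-1)*t^2 : ℂ) ≠ 0 :=
    mul_ne_zero (mul_ne_zero (mul_ne_zero two_ne_zero hf0) hf1') (pow_ne_zero _ ht)
  have hD0 : D 0 ≠ 0 := by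
    have h : D 0 = 2 * t ^ 2 * f * (f - 1) ^ 2 := by simp only [hD]; ring
    rw [h]
    exact mul_ne_zero (mul_ne_zero (mul_ne_zero two_ne_zero (pow_ne_zero _ ht)) hf0)
      (pow_ne_zero _ hf1')
  have hcN : Continuous N := by fun_prop
  have hcD : Continuous D := by fun_prop
  have hcont : Filter.Tendsto (fun ε => N ε / D ε) (nhds 0) (nhds (N 0 / D 0)) :=
    (hcN.tendsto 0).div (hcD.tendsto 0) hD0
  have hval : N 0 / D 0 = FV t f g a b c d := by
    have hD0eq : D 0 = (2*f*(f-1)*t^2) * (f-1) := by simp only [hD]; ring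
    have hN0eq : N 0 = (t^2*g^2*(3*f-1) - 2*g*t*f*(f-1) + 2*(f-1)^3*(a*f^2+b)
        + 2*c*f^2*(f-1)*t + 2*d*f^2*(f+1)*t^2) * (f-1) := by simp only [hN]; ring
    rw [hD0eq, hN0eq, mul_div_mul_right _ _ hf1', div_eq_iff hQ]
    exact (FV_clear_denoms t f g a b c d ht hf0 hf1').symm
  rw [hval] at hcont
  refine Filter.Tendsto.congr' ?_ (hcont.mono_left nhdsWithin_le_nhds)
  have h1 : ∀ᶠ ε in nhds (0:ℂ), 1 + ε * t ≠ 0 := by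
    have hc : ContinuousAt (fun ε : ℂ => 1 + ε * t) 0 := by fun_prop
    have := hc.eventually_ne (by norm_num : (1:ℂ) + 0 * t ≠ 0)
    simpa using this
  have h2 : ∀ᶠ ε in nhds (0:ℂ), f - 1 - ε * t ≠ 0 := by
    have hc : ContinuousAt (fun ε : ℂ => f - 1 - ε * t) 0 := by fun_prop
    have := hc.eventually_ne (by simpa using hf1' : f - 1 - 0 * t ≠ 0)
    simpa using this
  filter_upwards [nhdsWithin_le_nhds h1, nhdsWithin_le_nhds h2,
    self_mem_nhdsWithin] with ε hx hfx hε
  have hε : ε ≠ 0 := hε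
  have hux : f - (1 + ε * t) ≠ 0 := fun h => hfx (by linear_combination h)
  have hx1 : (1 + ε * t) - 1 ≠ 0 := by
    intro h
    exact hε (by
      have h' : ε * t = 0 := by linear_combination h
      rcases mul_eq_zero.mp h' with h'' | h''
      · exact h''
      · exact absurd h'' ht)
  have hDε : D ε ≠ 0 := by
    simp only [hD]
    exact mul_ne_zero (mul_ne_zero (mul_ne_zero (mul_ne_zero
      (mul_ne_zero two_ne_zero (pow_ne_zero _ ht)) hf0) hf1') (pow_ne_zero _ hx)) hfx
  rw [div_eq_iff hDε]
  simp only [hN, hD]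
  exact FVI_clear_denoms t f g a b c d ε ht hf0 hf1' hε hx hfx hux hx1
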